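/- Let n be a natural number with n ≡ 1 (mod 4). Then n belongs to B if and only if the number of pairs (a,b) of nonnegative integers with n = a² + 4b² is odd. -/

import Mathlib

open PowerSeries Finset

lemma zmod2_add_self : ∀ a : ZMod 2, a + a = 0 := by decide
lemma zmod2_mul_self : ∀ a : ZMod 2, a * a = a := by decide
lemma zmod2_add_eq_zero : ∀ a b : ZMod 2, a + b = 0 → a = b := by decide

/-- `g = ∑_{n ≥ 0} x^{n²}` in `(ℤ/2ℤ)[[x]]`: the coefficient of `x^m` is `1`
exactly when `m` is a perfect square. -/
noncomputable def g : PowerSeries (ZMod 2) :=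
  PowerSeries.mk fun m => if IsSquare m then 1 else 0

lemma coeff_g (k : ℕ) : PowerSeries.coeff (R := ZMod 2) k g = if IsSquare k then 1 else 0 := by
  simp [g]

lemma constCoeff_g : PowerSeries.constantCoeff (R := ZMod 2) g = 1 := by
  rw [← PowerSeries.coeff_zero_eq_constantCoeff, coeff_g]
  simp

lemma g_inv_mul : g * g⁻¹ = 1 :=
  PowerSeries.mul_inv_cancel _ (by rw [constCoeff_g]; exact one_ne_zero)

lemma twoPS : (2 : PowerSeries (ZMod 2)) = 0 := by
  ext k
  rw [show (2 : PowerSeries (ZMod 2)) = 1 + 1 by norm_num, map_add, map_zero]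
  exact zmod2_add_self _



lemma coeff_sq (f : PowerSeries (ZMod 2)) (k : ℕ) :
    PowerSeries.coeff (R := ZMod 2) k (f * f) =
      if k % 2 = 0 then PowerSeries.coeff (R := ZMod 2) (k / 2) f else 0 := by
  rw [PowerSeries.coeff_mul]
  by_cases hk : k % 2 = 0
  · simp only [hk, if_true]
    have hmem : (k/2, k/2) ∈ Finset.HasAntidiagonal.antidiagonal k := by
      rw [Finset.HasAntidiagonal.mem_antidiagonal]; omega
    rw [Finset.sum_eq_add_sum_sdiff_singleton_of_mem hmem]
    have hz : ∑ p ∈ Finset.HasAntidiagonal.antidiagonal k \ {(k/2, k/2)},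
        (PowerSeries.coeff (R := ZMod 2) p.1 f) * (PowerSeries.coeff (R := ZMod 2) p.2 f) = 0 := by
      apply Finset.sum_involution (fun p _ => (p.2, p.1))
      · intro p _
        rw [mul_comm]
        exact zmod2_add_self _
      · intro p hp _
        simp only [Finset.mem_sdiff, Finset.HasAntidiagonal.mem_antidiagonal, Finset.mem_singleton,
          Prod.mk.injEq, Ne, Prod.ext_iff] at hp ⊢
        omega
      · intro p hp
        simp only [Finset.mem_sdiff, Finset.HasAntidiagonal.mem_antidiagonal, Finset.mem_singleton,
          Prod.mk.injEq, Prod.ext_iff] at hp ⊢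
        omega
      · intro p _; rfl
    rw [hz, add_zero, zmod2_mul_self]
  · simp only [hk, if_false]
    apply Finset.sum_involution (fun p _ => (p.2, p.1))
    · intro p _
      rw [mul_comm]
      exact zmod2_add_self _
    · intro p hp _
      simp only [Finset.HasAntidiagonal.mem_antidiagonal, Ne, Prod.ext_iff] at hp ⊢
      omega
    · intro p hp
      simp only [Finset.HasAntidiagonal.mem_antidiagonal] at hp ⊢
      omega
    · intro p _; rfl

lemma sq_mod4 (c : ℕ) : c * c % 4 = 0 ∨ c * c % 4 = 1 := by
  rcases Nat.even_or_odd c with ⟨d, hd⟩ | ⟨d, hd⟩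
  · subst hd
    have : (d + d) * (d + d) = 4 * (d * d) := by ring
    rw [this]; omega
  · subst hd
    have : (2 * d + 1) * (2 * d + 1) = 4 * (d * d + d) + 1 := by ring
    rw [this]; omega

lemma not_isSquare_of_mod4 (k : ℕ) (hk : k % 4 = 2 ∨ k % 4 = 3) : ¬ IsSquare k := by
  rintro ⟨c, rfl⟩
  rcases sq_mod4 c with h | h <;> omega

lemma isSquare_four_mul_iff (b : ℕ) : IsSquare (4 * b) ↔ IsSquare b := by
  constructor
  · rintro ⟨c, hc⟩
    have hce : c % 2 = 0 := by
      by_contra h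
      obtain ⟨d, hd⟩ : ∃ d, c = 2 * d + 1 := ⟨c / 2, by omega⟩
      rw [hd] at hc
      have : (2 * d + 1) * (2 * d + 1) = 4 * (d * d + d) + 1 := by ring
      omega
    obtain ⟨d, hd⟩ : ∃ d, c = 2 * d := ⟨c / 2, by omega⟩
    rw [hd] at hc
    refine ⟨d, ?_⟩
    have : 2 * d * (2 * d) = 4 * (d * d) := by ring
    omega
  · rintro ⟨d, rfl⟩
    exact ⟨2 * d, by ring⟩

lemma coeff_g4 (k : ℕ) : PowerSeries.coeff (R := ZMod 2) k (g * g * (g * g)) =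
    if k % 4 = 0 ∧ IsSquare (k / 4) then 1 else 0 := by
  rw [coeff_sq (g * g) k]
  by_cases h2 : k % 2 = 0
  · rw [if_pos h2, coeff_sq g (k / 2)]
    by_cases h4 : k % 4 = 0
    · have : k / 2 % 2 = 0 := by omega
      rw [if_pos this, coeff_g]
      have : k / 2 / 2 = k / 4 := by omega
      rw [this]
      simp [h4]
    · have h22 : k / 2 % 2 ≠ 0 := by omega
      rw [if_neg h22, if_neg (by tauto)]
  · rw [if_neg h2, eq_comm, if_neg (by omega)]

lemma eq4 (k : ℕ) (hk : k % 2 = 0) :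
    PowerSeries.coeff (R := ZMod 2) k (g * g * (g * g)) = PowerSeries.coeff (R := ZMod 2) k g := by
  rw [coeff_g4, coeff_g]
  by_cases h4 : k % 4 = 0
  · have hkk : k = 4 * (k / 4) := by omega
    by_cases hs : IsSquare (k / 4)
    · rw [if_pos ⟨h4, hs⟩, if_pos (by rw [hkk]; exact (isSquare_four_mul_iff _).mpr hs)]
    · rw [if_neg (by tauto), if_neg (fun hc => hs ((isSquare_four_mul_iff _).mp (hkk ▸ hc)))]
  · have h42 : k % 4 = 2 := by omega
    rw [if_neg (by tauto), if_neg (not_isSquare_of_mod4 k (Or.inl h42))]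

lemma evenU (m : ℕ) (hm : m % 2 = 0) :
    PowerSeries.coeff (R := ZMod 2) m (g * (g⁻¹ * g⁻¹)) = PowerSeries.coeff (R := ZMod 2) m (g * g) := by
  have step1 : PowerSeries.coeff (R := ZMod 2) m (g * (g⁻¹ * g⁻¹))
      = PowerSeries.coeff (R := ZMod 2) m (g * g * (g * g) * (g⁻¹ * g⁻¹)) := by
    rw [PowerSeries.coeff_mul, PowerSeries.coeff_mul]
    apply Finset.sum_congr rfl
    intro p hp
    rw [Finset.HasAntidiagonal.mem_antidiagonal] at hp
    by_cases h2 : p.2 % 2 = 0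
    · rw [eq4 p.1 (by omega)]
    · rw [coeff_sq, if_neg h2, mul_zero, mul_zero]
  rw [step1]
  congr 1
  linear_combination (g * g * g * g⁻¹ + g * g) * g_inv_mul

lemma main_identity :
    g * ((g * (g⁻¹ * g⁻¹) + g * g) * (g * (g⁻¹ * g⁻¹) + g * g))
      = g⁻¹ + g * (g * g * (g * g)) := by
  linear_combination (g⁻¹ * ((g * g⁻¹) ^ 2 + g * g⁻¹ + 1)) * g_inv_mul
    + (g * g * g * g * (g⁻¹ * g⁻¹)) * twoPS

/-- `B` is the set of `n` for which the coefficient of `x^n` in `1/g` equals `1`. -/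
noncomputable def B : Set ℕ := {n | PowerSeries.coeff (R := ZMod 2) n g⁻¹ = 1}

lemma zmod2_cast_eq_one_iff (m : ℕ) : ((m : ZMod 2) = 1) ↔ Odd m := by
  rw [Nat.odd_iff, ← ZMod.natCast_mod m 2]
  have h : m % 2 = 0 ∨ m % 2 = 1 := by omega
  rcases h with h | h <;> rw [h]
  · simp
  · simp

theorem stmt1 (n : ℕ) (hn : n % 4 = 1) :
    n ∈ B ↔ Odd (Nat.card {p : ℕ × ℕ // n = p.1 ^ 2 + 4 * p.2 ^ 2}) := by
  have hzero : PowerSeries.coeff (R := ZMod 2) n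
      (g * ((g * (g⁻¹ * g⁻¹) + g * g) * (g * (g⁻¹ * g⁻¹) + g * g))) = 0 := by
    rw [PowerSeries.coeff_mul]
    apply Finset.sum_eq_zero
    intro p hp
    rw [Finset.HasAntidiagonal.mem_antidiagonal] at hp
    by_cases hsq : IsSquare p.1
    · rw [coeff_sq]
      by_cases h2 : p.2 % 2 = 0
      · rw [if_pos h2]
        by_cases h4 : p.2 % 4 = 0
        · have hhalf : p.2 / 2 % 2 = 0 := by omega
          have hzc : PowerSeries.coeff (R := ZMod 2) (p.2 / 2) (g * (g⁻¹ * g⁻¹) + g * g) = 0 := by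
            rw [map_add, evenU _ hhalf]
            exact zmod2_add_self _
          rw [hzc, mul_zero]
        · exfalso
          obtain ⟨c, hc⟩ := hsq
          rcases sq_mod4 c with h | h <;> omega
      · rw [if_neg h2, mul_zero]
    · rw [coeff_g, if_neg hsq, zero_mul]
  have key : PowerSeries.coeff (R := ZMod 2) n g⁻¹
      = PowerSeries.coeff (R := ZMod 2) n (g * (g * g * (g * g))) := by
    apply zmod2_add_eq_zero
    rw [← map_add, ← main_identity]
    exact hzero
  have hcount : PowerSeries.coeff (R := ZMod 2) n (g * (g * g * (g * g)))
      = (((Finset.HasAntidiagonal.antidiagonal n).filter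
          (fun p => IsSquare p.1 ∧ p.2 % 4 = 0 ∧ IsSquare (p.2 / 4))).card : ZMod 2) := by
    rw [PowerSeries.coeff_mul, ← Finset.sum_boole]
    apply Finset.sum_congr rfl
    intro p _
    rw [coeff_g, coeff_g4]
    by_cases h1 : IsSquare p.1 <;> by_cases h2 : p.2 % 4 = 0 ∧ IsSquare (p.2 / 4) <;>
      simp [h1, h2]
  have hcard : ((Finset.HasAntidiagonal.antidiagonal n).filter
      (fun p => IsSquare p.1 ∧ p.2 % 4 = 0 ∧ IsSquare (p.2 / 4))).card
      = Nat.card {p : ℕ × ℕ // n = p.1 ^ 2 + 4 * p.2 ^ 2} := by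
    have hset : {p : ℕ × ℕ | n = p.1 ^ 2 + 4 * p.2 ^ 2}
        = ↑(((Finset.range (n+1)) ×ˢ (Finset.range (n+1))).filter
            (fun p => n = p.1 ^ 2 + 4 * p.2 ^ 2)) := by
      ext p
      simp only [Finset.coe_filter, Finset.mem_product, Finset.mem_range, Set.mem_setOf_eq]
      constructor
      · intro h
        refine ⟨⟨?_, ?_⟩, h⟩
        · have h1 : p.1 ≤ p.1 ^ 2 := by nlinarith
          omega
        · have h2 : p.2 ≤ 4 * p.2 ^ 2 := by nlinarith
          omega
      · tauto
    have e1 : Nat.card {p : ℕ × ℕ // n = p.1 ^ 2 + 4 * p.2 ^ 2}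
        = ({p : ℕ × ℕ | n = p.1 ^ 2 + 4 * p.2 ^ 2}).ncard := Nat.card_coe_set_eq _
    rw [e1, hset, Set.ncard_coe_finset, eq_comm]
    apply Finset.card_bij (fun p _ => (p.1 ^ 2, 4 * p.2 ^ 2))
    · intro a ha
      simp only [Finset.mem_filter, Finset.mem_product, Finset.mem_range] at ha
      simp only [Finset.mem_filter, Finset.HasAntidiagonal.mem_antidiagonal]
      refine ⟨by omega, ⟨a.1, by rw [pow_two]⟩, ?_, ?_⟩
      · generalize a.2 ^ 2 = t; omega
      · have : 4 * a.2 ^ 2 / 4 = a.2 ^ 2 := by generalize a.2 ^ 2 = t; omega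
        rw [this]
        exact ⟨a.2, by rw [pow_two]⟩
    · intro a ha b hb hab
      simp only [Prod.mk.injEq] at hab
      have h1 : a.1 = b.1 := Nat.pow_left_injective (by norm_num) hab.1
      have h2 : a.2 = b.2 := Nat.pow_left_injective (by norm_num)
        (by generalize hx : a.2 ^ 2 = x at hab; generalize hy : b.2 ^ 2 = y at hab;
            omega : a.2 ^ 2 = b.2 ^ 2)
      exact Prod.ext h1 h2
    · intro q hq
      simp only [Finset.mem_filter, Finset.HasAntidiagonal.mem_antidiagonal] at hq
      obtain ⟨hsum, ⟨c, hc⟩, h4, ⟨d, hd⟩⟩ := hq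
      refine ⟨(c, d), ?_, ?_⟩
      · simp only [Finset.mem_filter, Finset.mem_product, Finset.mem_range]
        have hq1 : q.1 = c ^ 2 := by rw [hc, pow_two]
        have hq2 : q.2 = 4 * d ^ 2 := by
          have : q.2 = 4 * (q.2 / 4) := by omega
          rw [this, hd, pow_two]
        have hcc : c ≤ c ^ 2 := by nlinarith
        have hdd : d ≤ 4 * d ^ 2 := by nlinarith
        refine ⟨⟨by omega, by omega⟩, by omega⟩
      · have hq1 : q.1 = c ^ 2 := by rw [hc, pow_two]
        have hq2 : q.2 = 4 * d ^ 2 := by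
          have : q.2 = 4 * (q.2 / 4) := by omega
          rw [this, hd, pow_two]
        exact Prod.ext hq1.symm hq2.symm
  show PowerSeries.coeff (R := ZMod 2) n g⁻¹ = 1 ↔ _
  rw [key, hcount, hcard]
  exact zmod2_cast_eq_one_iff _
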